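/- arXiv:1211.0389 — 3 statements merged into one kernel-verified Lean document; each statement's English description precedes it below -/
import Mathlib

section
/- Let A and A' = A + D be real symmetric n×n matrices, and for z = u + iv with v > 0 let R = (n^{-1/2}A - zI)^{-1} and R' = (n^{-1/2}A' - zI)^{-1}. Then |Tr R - Tr R'| ≤ v^{-2} (Tr D²)^{1/2}. -/
open Matrix Finset

/-- Cauchy–Schwarz for complex sums. -/
lemma abs_sum_mul_le_sqrt {ι : Type*} [Fintype ι] (x y : ι → ℂ) :
    ‖∑ i, x i * y i‖ ≤
      Real.sqrt (∑ i, ‖x i‖ ^ 2) * Real.sqrt (∑ i, ‖y i‖ ^ 2) := by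
  calc ‖∑ i, x i * y i‖ ≤ ∑ i, ‖x i * y i‖ :=
        norm_sum_le _ _
    _ = ∑ i, ‖x i‖ * ‖y i‖ := by simp [_root_.map_mul]
    _ ≤ _ := by
        have h := Finset.sum_mul_sq_le_sq_mul_sq Finset.univ
          (fun i => ‖x i‖) (fun i => ‖y i‖)
        have h0 : (0:ℝ) ≤ ∑ i, ‖x i‖ * ‖y i‖ :=
          Finset.sum_nonneg fun i _ => mul_nonneg (norm_nonneg _) (norm_nonneg _)
        have := Real.sqrt_le_sqrt h
        rwa [Real.sqrt_sq h0, Real.sqrt_mul (Finset.sum_nonneg fun i _ => sq_nonneg _)] at this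

/-- Lower bound for a Hermitian matrix shifted by `z`. -/
lemma shifted_mulVec_lower {m : Type*} [Fintype m] [DecidableEq m]
    (Hc : Matrix m m ℂ) (hH : Hcᴴ = Hc) (z : ℂ) (hz : 0 < z.im) (y : m → ℂ) :
    z.im * Real.sqrt (∑ i, ‖y i‖ ^ 2) ≤
      Real.sqrt (∑ i, ‖((Hc - z • (1 : Matrix m m ℂ)) *ᵥ y) i‖ ^ 2) := by
  set M : Matrix m m ℂ := Hc - z • 1 with hM
  set Ny : ℝ := ∑ i, ‖y i‖ ^ 2 with hNy
  have hNy0 : 0 ≤ Ny := Finset.sum_nonneg fun i _ => sq_nonneg _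
  set S : ℂ := ∑ i, (starRingEnd ℂ) (y i) * ((M *ᵥ y) i) with hS
  -- decompose
  have hMv : M *ᵥ y = Hc *ᵥ y - z • y := by
    rw [hM, sub_mulVec, smul_mulVec, one_mulVec]
  set T : ℂ := ∑ i, (starRingEnd ℂ) (y i) * ((Hc *ᵥ y) i) with hT
  have hTconj : (starRingEnd ℂ) T = T := by
    rw [hT, map_sum]
    have hentry : ∀ i j, (starRingEnd ℂ) (Hc i j) = Hc j i := by
      intro i j
      have := congrFun (congrFun hH j) i
      simpa [Matrix.conjTranspose_apply] using this
    calc ∑ i, (starRingEnd ℂ) ((starRingEnd ℂ) (y i) * (Hc *ᵥ y) i)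
        = ∑ i, ∑ j, y i * ((starRingEnd ℂ) (Hc i j) * (starRingEnd ℂ) (y j)) := by
          simp [Matrix.mulVec, dotProduct, Finset.mul_sum, _root_.map_mul, map_sum]
      _ = ∑ j, ∑ i, (starRingEnd ℂ) (y j) * (Hc j i * y i) := by
          rw [Finset.sum_comm]
          refine Finset.sum_congr rfl fun j _ => Finset.sum_congr rfl fun i _ => ?_
          rw [hentry]; ring
      _ = T := by simp [hT, Matrix.mulVec, dotProduct, Finset.mul_sum]
  have hTim : T.im = 0 := by
    have := Complex.conj_eq_iff_im.mp hTconj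
    exact this
  have hSval : S = T - z * (Ny : ℂ) := by
    rw [hS, hT, hMv]
    have : ∀ i, (starRingEnd ℂ) (y i) * ((Hc *ᵥ y - z • y) i)
        = (starRingEnd ℂ) (y i) * (Hc *ᵥ y) i - z * ((starRingEnd ℂ) (y i) * y i) := by
      intro i; simp [Pi.sub_apply, Pi.smul_apply, smul_eq_mul]; ring
    rw [Finset.sum_congr rfl fun i _ => this i, Finset.sum_sub_distrib, ← Finset.mul_sum]
    congr 1
    rw [hNy, Complex.ofReal_sum]
    congr 1
    exact Finset.sum_congr rfl fun i _ => by
      rw [mul_comm, Complex.mul_conj, Complex.normSq_eq_norm_sq]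
  set NM : ℝ := ∑ i, ‖(M *ᵥ y) i‖ ^ 2 with hNM
  have hNM0 : 0 ≤ NM := Finset.sum_nonneg fun i _ => sq_nonneg _
  have hSim : S.im = -(z.im * Ny) := by
    rw [hSval]
    simp [Complex.sub_im, hTim, Complex.mul_im]
  have h1 : z.im * Ny ≤ ‖S‖ := by
    have h := Complex.abs_im_le_norm S
    rw [hSim, abs_neg, abs_of_nonneg (mul_nonneg hz.le hNy0)] at h
    exact h
  have h2 : ‖S‖ ≤ Real.sqrt Ny * Real.sqrt NM := by
    have h := abs_sum_mul_le_sqrt (fun i => (starRingEnd ℂ) (y i)) (fun i => (M *ᵥ y) i)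
    simpa [hS, hNy, hNM, Complex.norm_conj] using h
  have hkey : z.im * Ny ≤ Real.sqrt Ny * Real.sqrt NM := h1.trans h2
  rcases eq_or_lt_of_le (Real.sqrt_nonneg Ny) with h0 | h0
  · rw [← h0, mul_zero]
    exact Real.sqrt_nonneg _
  · have hNyeq : Real.sqrt Ny * Real.sqrt Ny = Ny := Real.mul_self_sqrt hNy0
    nlinarith [hkey, h0, hNyeq]

lemma shifted_det_ne_zero {m : Type*} [Fintype m] [DecidableEq m]
    (Hc : Matrix m m ℂ) (hH : Hcᴴ = Hc) (z : ℂ) (hz : 0 < z.im) :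
    (Hc - z • (1 : Matrix m m ℂ)).det ≠ 0 := by
  intro h
  obtain ⟨y, hy0, hMy⟩ := Matrix.exists_mulVec_eq_zero_iff.mpr h
  have hle := shifted_mulVec_lower Hc hH z hz y
  rw [hMy] at hle
  simp only [Pi.zero_apply, map_zero, norm_zero] at hle
  have hzero : Real.sqrt (∑ i : m, (0:ℝ) ^ 2) = 0 := by simp
  rw [hzero] at hle
  have hs0 : Real.sqrt (∑ i, ‖y i‖ ^ 2) = 0 := by
    nlinarith [Real.sqrt_nonneg (∑ i, ‖y i‖ ^ 2)]
  have hNy0 : (∑ i, ‖y i‖ ^ 2) = 0 :=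
    (Real.sqrt_eq_zero (Finset.sum_nonneg fun i _ => sq_nonneg _)).mp hs0
  apply hy0
  funext i
  have := (Finset.sum_eq_zero_iff_of_nonneg (fun i _ => sq_nonneg (‖y i‖))).mp
    hNy0 i (Finset.mem_univ i)
  have : ‖y i‖ = 0 := by nlinarith [norm_nonneg (y i)]
  simpa using this

lemma inv_mulVec_bound {m : Type*} [Fintype m] [DecidableEq m]
    (Hc : Matrix m m ℂ) (hH : Hcᴴ = Hc) (z : ℂ) (hz : 0 < z.im) (x : m → ℂ) :
    Real.sqrt (∑ i, ‖((Hc - z • (1 : Matrix m m ℂ))⁻¹ *ᵥ x) i‖ ^ 2) ≤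
      z.im⁻¹ * Real.sqrt (∑ i, ‖x i‖ ^ 2) := by
  set M : Matrix m m ℂ := Hc - z • 1 with hM
  have hdet := shifted_det_ne_zero Hc hH z hz
  have hMx : M *ᵥ (M⁻¹ *ᵥ x) = x := by
    rw [Matrix.mulVec_mulVec, Matrix.mul_nonsing_inv _ (Ne.isUnit hdet), Matrix.one_mulVec]
  have hle := shifted_mulVec_lower Hc hH z hz (M⁻¹ *ᵥ x)
  rw [← hM, hMx] at hle
  calc Real.sqrt (∑ i, ‖(M⁻¹ *ᵥ x) i‖ ^ 2)
      = z.im⁻¹ * (z.im * Real.sqrt (∑ i, ‖(M⁻¹ *ᵥ x) i‖ ^ 2)) := by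
        field_simp
    _ ≤ z.im⁻¹ * Real.sqrt (∑ i, ‖x i‖ ^ 2) := by
        exact mul_le_mul_of_nonneg_left hle (by positivity)

theorem trace_resolvent_perturbation {n : ℕ} (A D : Matrix (Fin n) (Fin n) ℝ)
    (hA : A.IsSymm) (hD : D.IsSymm) (z : ℂ) (hz : 0 < z.im) :
    ‖(Matrix.trace ((((Real.sqrt n : ℂ))⁻¹ • A.map Complex.ofReal
            - z • (1 : Matrix (Fin n) (Fin n) ℂ))⁻¹)
          - Matrix.trace ((((Real.sqrt n : ℂ))⁻¹ • (A + D).map Complex.ofReal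
            - z • (1 : Matrix (Fin n) (Fin n) ℂ))⁻¹))‖
      ≤ (1 / z.im ^ 2) * Real.sqrt (Matrix.trace (D * D)) := by
  rcases Nat.eq_zero_or_pos n with hn | hn
  · subst hn
    simp [Matrix.trace]
  set v : ℝ := z.im with hv
  set c : ℂ := ((Real.sqrt n : ℂ))⁻¹ with hc
  have hcstar : star c = c := by
    rw [hc, star_inv₀]
    congr 1
    exact Complex.conj_ofReal _
  set Dc : Matrix (Fin n) (Fin n) ℂ := D.map Complex.ofReal with hDc
  set Hc : Matrix (Fin n) (Fin n) ℂ := c • A.map Complex.ofReal with hHc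
  set Hc' : Matrix (Fin n) (Fin n) ℂ := c • (A + D).map Complex.ofReal with hHc'
  have hmapsymm : ∀ (B : Matrix (Fin n) (Fin n) ℝ), B.IsSymm →
      (B.map Complex.ofReal)ᴴ = B.map Complex.ofReal := by
    intro B hB
    ext i j
    simp only [Matrix.conjTranspose_apply, Matrix.map_apply, Complex.conj_ofReal,
      Complex.ofReal_inj]
    rw [Complex.star_def, Complex.conj_ofReal]
    exact_mod_cast congrFun (congrFun hB i) j
  have hHcH : Hcᴴ = Hc := by
    rw [hHc, Matrix.conjTranspose_smul, hcstar, hmapsymm A hA]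
  have hHcH' : Hc'ᴴ = Hc' := by
    rw [hHc', Matrix.conjTranspose_smul, hcstar, hmapsymm (A + D) (hA.add hD)]
  set M : Matrix (Fin n) (Fin n) ℂ := Hc - z • 1 with hM
  set M' : Matrix (Fin n) (Fin n) ℂ := Hc' - z • 1 with hM'
  have hdet : M.det ≠ 0 := shifted_det_ne_zero Hc hHcH z hz
  have hdet' : M'.det ≠ 0 := shifted_det_ne_zero Hc' hHcH' z hz
  -- resolvent identity
  have hdiff : M' - M = c • Dc := by
    rw [hM', hM, hHc', hHc, hDc]
    ext i j
    simp [Matrix.map_apply, Matrix.sub_apply, Matrix.smul_apply, smul_eq_mul]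
    push_cast
    ring
  have hres : M⁻¹ - M'⁻¹ = M⁻¹ * (c • Dc) * M'⁻¹ := by
    rw [← hdiff]
    have h1 : M⁻¹ * (M' - M) * M'⁻¹ = M⁻¹ * M' * M'⁻¹ - M⁻¹ * M * M'⁻¹ := by
      rw [Matrix.mul_sub, Matrix.sub_mul]
    rw [h1, Matrix.mul_assoc, Matrix.mul_nonsing_inv _ (Ne.isUnit hdet'), mul_one,
      Matrix.nonsing_inv_mul _ (Ne.isUnit hdet), one_mul]
  set X : Matrix (Fin n) (Fin n) ℂ := M'⁻¹ * M⁻¹ with hX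
  have htr : M⁻¹.trace - M'⁻¹.trace = c * (X * Dc).trace := by
    rw [← Matrix.trace_sub, hres, Matrix.trace_mul_cycle, Matrix.mul_smul,
      Matrix.trace_smul, smul_eq_mul]
  have habs_c : ‖c‖ = (Real.sqrt n)⁻¹ := by
    rw [hc, norm_inv, Complex.norm_real, Real.norm_eq_abs, abs_of_nonneg (Real.sqrt_nonneg _)]
  have hsn : 0 < Real.sqrt n := Real.sqrt_pos.mpr (by exact_mod_cast hn)
  have htrace_expand : (X * Dc).trace = ∑ p : Fin n × Fin n, X p.1 p.2 * Dc p.2 p.1 := by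
    rw [Fintype.sum_prod_type]
    simp [Matrix.trace, Matrix.diag, Matrix.mul_apply]
  have hDsum : (∑ p : Fin n × Fin n, ‖Dc p.2 p.1‖ ^ 2) = Matrix.trace (D * D) := by
    rw [Fintype.sum_prod_type]
    simp only [hDc, Matrix.map_apply, Complex.norm_real, Real.norm_eq_abs, _root_.sq_abs]
    rw [Matrix.trace]
    simp only [Matrix.diag, Matrix.mul_apply]
    refine Finset.sum_congr rfl fun i _ => Finset.sum_congr rfl fun j _ => ?_
    have hji : D j i = D i j := congrFun (congrFun hD i) j
    rw [hji]; ring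
  have hXcol : ∀ j, (∑ i, ‖X i j‖ ^ 2) ≤ ((v ^ 2)⁻¹) ^ 2 := by
    intro j
    have he : (fun i => X i j) = M'⁻¹ *ᵥ (M⁻¹ *ᵥ Pi.single j 1) := by
      rw [Matrix.mulVec_mulVec, ← hX, Matrix.mulVec_single]
      funext i; simp
    have hsingle : (∑ i, ‖(Pi.single j 1 : Fin n → ℂ) i‖ ^ 2) = 1 := by
      rw [Finset.sum_eq_single j]
      · simp
      · intro b _ hb; simp [Pi.single_apply, hb]
      · intro h; exact absurd (Finset.mem_univ j) h
    have h1 := inv_mulVec_bound Hc' hHcH' z hz (M⁻¹ *ᵥ Pi.single j 1)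
    have h2 := inv_mulVec_bound Hc hHcH z hz (Pi.single j 1 : Fin n → ℂ)
    rw [← hM, hsingle, Real.sqrt_one, mul_one] at h2
    rw [← hM'] at h1
    have hb : Real.sqrt (∑ i, ‖X i j‖ ^ 2) ≤ (v ^ 2)⁻¹ := by
      have : Real.sqrt (∑ i, ‖(M'⁻¹ *ᵥ (M⁻¹ *ᵥ Pi.single j 1)) i‖ ^ 2)
          ≤ v⁻¹ * v⁻¹ :=
        h1.trans (mul_le_mul_of_nonneg_left h2 (by positivity))
      rw [← he] at this
      calc Real.sqrt (∑ i, ‖X i j‖ ^ 2) ≤ v⁻¹ * v⁻¹ := this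
        _ = (v ^ 2)⁻¹ := by rw [sq, mul_inv]
    have hnn : (0:ℝ) ≤ ∑ i, ‖X i j‖ ^ 2 :=
      Finset.sum_nonneg fun i _ => sq_nonneg _
    calc (∑ i, ‖X i j‖ ^ 2)
        = Real.sqrt (∑ i, ‖X i j‖ ^ 2) ^ 2 := (Real.sq_sqrt hnn).symm
      _ ≤ ((v ^ 2)⁻¹) ^ 2 := by
          exact pow_le_pow_left₀ (Real.sqrt_nonneg _) hb 2
  have hXsum : (∑ p : Fin n × Fin n, ‖X p.1 p.2‖ ^ 2) ≤ n * ((v ^ 2)⁻¹) ^ 2 := by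
    rw [Fintype.sum_prod_type, Finset.sum_comm]
    calc (∑ j, ∑ i, ‖X i j‖ ^ 2) ≤ ∑ _j : Fin n, ((v ^ 2)⁻¹) ^ 2 :=
          Finset.sum_le_sum fun j _ => hXcol j
      _ = n * ((v ^ 2)⁻¹) ^ 2 := by
          rw [Finset.sum_const, Finset.card_univ, Fintype.card_fin, nsmul_eq_mul]
  have hsqrtX : Real.sqrt (∑ p : Fin n × Fin n, ‖X p.1 p.2‖ ^ 2)
      ≤ Real.sqrt n * (v ^ 2)⁻¹ := by
    have h := Real.sqrt_le_sqrt hXsum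
    rwa [Real.sqrt_mul (by positivity), Real.sqrt_sq (by positivity)] at h
  have hCS := abs_sum_mul_le_sqrt (fun p : Fin n × Fin n => X p.1 p.2)
    (fun p : Fin n × Fin n => Dc p.2 p.1)
  calc ‖M⁻¹.trace - M'⁻¹.trace‖
      = ‖c‖ * ‖(X * Dc).trace‖ := by rw [htr, norm_mul]
    _ ≤ (Real.sqrt n)⁻¹ * (Real.sqrt (∑ p : Fin n × Fin n, ‖X p.1 p.2‖ ^ 2)
          * Real.sqrt (∑ p : Fin n × Fin n, ‖Dc p.2 p.1‖ ^ 2)) := by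
        rw [habs_c, htrace_expand]
        exact mul_le_mul_of_nonneg_left hCS (by positivity)
    _ ≤ (Real.sqrt n)⁻¹ * ((Real.sqrt n * (v ^ 2)⁻¹)
          * Real.sqrt (∑ p : Fin n × Fin n, ‖Dc p.2 p.1‖ ^ 2)) := by
        exact mul_le_mul_of_nonneg_left
          (mul_le_mul_of_nonneg_right hsqrtX (Real.sqrt_nonneg _)) (by positivity)
    _ = (1 / v ^ 2) * Real.sqrt (Matrix.trace (D * D)) := by
        rw [hDsum]
        field_simp
end

section
/- Let σ_{ij}² ≥ 0 with max_i (1/n)Σ_j σ_{ij}² ≤ C². Let T be a tree on vertex set {1, ..., t} with t−1 edges. Then the sum over all injections (or all maps) ι: {1,...,t} → {1,...,n} of the product over edges {a,b} of T of σ_{ι(a)ι(b)}² is at most C^{2(t−1)} n^t; equivalently, n^{-t} Σ_{i_1,...,i_t = 1}^n Π_{{a,b} ∈ E(T)} σ_{i_a i_b}² ≤ C^{2(t−1)}. -/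
open Finset SimpleGraph

/-- Core combinatorial bound via "leaf-stripping" on a parent function. -/
lemma aux_sum_bound {n t : ℕ} (hn : 0 < n) (g : Fin n → Fin n → ℝ)
    (hg : ∀ i j, 0 ≤ g i j) (C : ℝ) (hC : 0 ≤ C)
    (hB : ∀ i, ∑ j, g i j ≤ (n : ℝ) * C ^ 2)
    (p : Fin t → Fin t) (d : Fin t → ℕ) :
    ∀ S : Finset (Fin t), (∀ w ∈ S, d (p w) < d w) →
      ∑ ι : Fin t → Fin n, ∏ w ∈ S, g (ι (p w)) (ι w)
        ≤ (n : ℝ) ^ t * C ^ (2 * S.card) := by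
  intro S
  induction S using Finset.strongInduction with
  | _ S ih =>
    intro hS
    rcases S.eq_empty_or_nonempty with rfl | hne
    · simp [Finset.card_univ]
    obtain ⟨w₀, hw₀S, hmax⟩ := Finset.exists_max_image S d hne
    have hpw₀ : p w₀ ≠ w₀ := fun h => absurd (hS w₀ hw₀S) (by rw [h]; omega)
    have hpx : ∀ x ∈ S, p x ≠ w₀ := by
      intro x hx h
      have h1 := hS x hx
      have h2 := hmax x hx
      rw [h] at h1; omega
    -- the involution swapping the value at w₀ with an extra coordinate
    have einv : Function.Involutive
        (fun x : (Fin t → Fin n) × Fin n => (Function.update x.1 w₀ x.2, x.1 w₀)) := by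
      intro x
      simp [Function.update_idem, Function.update_eq_self]
    set e := einv.toPerm
    have key : (n : ℝ) * ∑ ι : Fin t → Fin n, ∏ w ∈ S, g (ι (p w)) (ι w)
        = ∑ ι : Fin t → Fin n, ∑ j : Fin n,
            ∏ w ∈ S, g (Function.update ι w₀ j (p w)) (Function.update ι w₀ j w) := by
      have := Equiv.sum_comp e
        (fun x : (Fin t → Fin n) × Fin n => ∏ w ∈ S, g (x.1 (p w)) (x.1 w))
      rw [Fintype.sum_prod_type, Fintype.sum_prod_type] at this
      simp only [Finset.sum_const, Finset.card_univ, Fintype.card_fin, nsmul_eq_mul] at this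
      rw [← Finset.mul_sum] at this
      rw [← this]
      rfl
    have hsplit : ∀ ι : Fin t → Fin n, ∀ j : Fin n,
        ∏ w ∈ S, g (Function.update ι w₀ j (p w)) (Function.update ι w₀ j w)
        = g (ι (p w₀)) j * ∏ w ∈ S.erase w₀, g (ι (p w)) (ι w) := by
      intro ι j
      rw [← Finset.mul_prod_erase _ _ hw₀S]
      congr 1
      · rw [Function.update_of_ne hpw₀, Function.update_self]
      · apply Finset.prod_congr rfl
        intro w hw
        have hw1 : w ≠ w₀ := Finset.ne_of_mem_erase hw
        have hw2 : p w ≠ w₀ := hpx w (Finset.mem_of_mem_erase hw)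
        rw [Function.update_of_ne hw2, Function.update_of_ne hw1]
    have hprodnn : ∀ ι : Fin t → Fin n, 0 ≤ ∏ w ∈ S.erase w₀, g (ι (p w)) (ι w) :=
      fun ι => Finset.prod_nonneg fun w _ => hg _ _
    have step : (n : ℝ) * ∑ ι : Fin t → Fin n, ∏ w ∈ S, g (ι (p w)) (ι w)
        ≤ ((n : ℝ) * C ^ 2) *
          ∑ ι : Fin t → Fin n, ∏ w ∈ S.erase w₀, g (ι (p w)) (ι w) := by
      rw [key, Finset.mul_sum]
      apply Finset.sum_le_sum
      intro ι _
      calc ∑ j : Fin n, ∏ w ∈ S, g (Function.update ι w₀ j (p w)) (Function.update ι w₀ j w)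
          = (∑ j : Fin n, g (ι (p w₀)) j) * ∏ w ∈ S.erase w₀, g (ι (p w)) (ι w) := by
            rw [Finset.sum_mul]
            exact Finset.sum_congr rfl fun j _ => hsplit ι j
        _ ≤ ((n : ℝ) * C ^ 2) * ∏ w ∈ S.erase w₀, g (ι (p w)) (ι w) :=
            mul_le_mul_of_nonneg_right (hB _) (hprodnn ι)
    have ihS : ∑ ι : Fin t → Fin n, ∏ w ∈ S.erase w₀, g (ι (p w)) (ι w)
        ≤ (n : ℝ) ^ t * C ^ (2 * (S.erase w₀).card) :=
      ih (S.erase w₀) (Finset.erase_ssubset hw₀S)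
        (fun w hw => hS w (Finset.mem_of_mem_erase hw))
    have hnpos : (0:ℝ) < n := by exact_mod_cast hn
    have hcard : (S.erase w₀).card = S.card - 1 := Finset.card_erase_of_mem hw₀S
    have hcpos : 1 ≤ S.card := Finset.one_le_card.2 hne
    have hC2 : (0:ℝ) ≤ C ^ 2 := sq_nonneg C
    have final : (n : ℝ) * (∑ ι : Fin t → Fin n, ∏ w ∈ S, g (ι (p w)) (ι w))
        ≤ (n : ℝ) * ((n : ℝ) ^ t * C ^ (2 * S.card)) := by
      calc (n : ℝ) * ∑ ι : Fin t → Fin n, ∏ w ∈ S, g (ι (p w)) (ι w)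
          ≤ ((n : ℝ) * C ^ 2) * ∑ ι : Fin t → Fin n, ∏ w ∈ S.erase w₀, g (ι (p w)) (ι w) := step
        _ ≤ ((n : ℝ) * C ^ 2) * ((n : ℝ) ^ t * C ^ (2 * (S.erase w₀).card)) := by
            apply mul_le_mul_of_nonneg_left ihS
            positivity
        _ = (n : ℝ) * ((n : ℝ) ^ t * (C ^ 2 * C ^ (2 * (S.card - 1)))) := by
            rw [hcard]; ring
        _ = (n : ℝ) * ((n : ℝ) ^ t * C ^ (2 * S.card)) := by
            have h2 : 2 + 2 * (S.card - 1) = 2 * S.card := by omega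
            rw [← pow_add, h2]
    exact le_of_mul_le_mul_left final hnpos

/-- From a tree, extract a parent function and a depth function. -/
lemma tree_parent {t : ℕ} (T : SimpleGraph (Fin t)) (hT : T.IsTree) (r : Fin t) :
    ∃ (p : Fin t → Fin t) (d : Fin t → ℕ),
      (∀ w, w ≠ r → T.Adj (p w) w) ∧ (∀ w, w ≠ r → d (p w) < d w) := by
  have hep := hT.existsUnique_path
  set pa : ∀ w : Fin t, T.Walk r w := fun w => (hep r w).choose with hpa
  have hpath : ∀ w, (pa w).IsPath := fun w => (hep r w).choose_spec.1
  have huniq : ∀ w (q : T.Walk r w), q.IsPath → q = pa w :=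
    fun w q hq => (hep r w).choose_spec.2 q hq
  refine ⟨fun w => ((pa w).reverse).getVert 1, fun w => (pa w).length, ?_, ?_⟩
  · intro w hw
    have hnil : ¬ ((pa w).reverse).Nil := SimpleGraph.Walk.not_nil_of_ne hw
    exact (SimpleGraph.Walk.adj_snd hnil).symm
  · intro w hw
    have hnil : ¬ ((pa w).reverse).Nil := SimpleGraph.Walk.not_nil_of_ne hw
    set q := ((pa w).reverse).tail with hq
    have hqpath : q.IsPath := ((hpath w).reverse).tail
    have hqr : q.reverse.IsPath := hqpath.reverse
    have := huniq _ q.reverse hqr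
    have hlen : (pa (((pa w).reverse).getVert 1)).length = q.length := by
      rw [← this, SimpleGraph.Walk.length_reverse]
    have hlen2 : q.length + 1 = (pa w).reverse.length :=
      SimpleGraph.Walk.length_tail_add_one hnil
    rw [SimpleGraph.Walk.length_reverse] at hlen2
    show (pa (((pa w).reverse).getVert 1)).length < (pa w).length
    omega

theorem tree_weight_sum_bound {n t : ℕ} (hn : 0 < n) (ht : 0 < t)
    (C : ℝ) (hC : 0 < C)
    (s : Fin n → Fin n → ℝ) (hs : ∀ i j, 0 ≤ s i j)
    (hsym : ∀ i j, s i j = s j i)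
    (hB : ∀ i, (1 / (n : ℝ)) * ∑ j, s i j ≤ C ^ 2)
    (T : SimpleGraph (Fin t)) [DecidableRel T.Adj] (hT : T.IsTree) :
    ((n : ℝ) ^ t)⁻¹ * ∑ ι : Fin t → Fin n,
        ∏ e ∈ T.edgeFinset,
          Sym2.lift ⟨fun a b => s (ι a) (ι b), fun a b => hsym (ι a) (ι b)⟩ e
      ≤ C ^ (2 * (t - 1)) := by
  classical
  set r : Fin t := ⟨0, ht⟩
  obtain ⟨p, d, hadj, hd⟩ := tree_parent T hT r
  set E := (Finset.univ.erase r)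
  have hmemE : ∀ w ∈ E, w ≠ r := fun w hw => Finset.ne_of_mem_erase hw
  have hinj : ∀ x ∈ E, ∀ y ∈ E, Sym2.mk (p x) x = Sym2.mk (p y) y → x = y := by
    intro x hx y hy h
    rw [Sym2.eq_iff] at h
    rcases h with ⟨_, h2⟩ | ⟨h1, h2⟩
    · exact h2
    · exfalso
      have d1 := hd x (hmemE x hx)
      have d2 := hd y (hmemE y hy)
      rw [h1] at d1; rw [← h2] at d2; omega
  have hcardE : E.card = t - 1 := by
    simp [E, Finset.card_erase_of_mem, Finset.card_univ]
  have hsub : E.image (fun w => Sym2.mk (p w) w) ⊆ T.edgeFinset := by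
    intro e he
    obtain ⟨w, hw, rfl⟩ := Finset.mem_image.1 he
    rw [SimpleGraph.mem_edgeFinset]
    exact hadj w (hmemE w hw)
  have hcardedge : T.edgeFinset.card = t - 1 := by
    have := hT.card_edgeFinset
    simp only [Fintype.card_fin] at this
    omega
  have himg : E.image (fun w => Sym2.mk (p w) w) = T.edgeFinset := by
    apply Finset.eq_of_subset_of_card_le hsub
    rw [hcardedge, Finset.card_image_of_injOn (fun x hx y hy => hinj x hx y hy), hcardE]
  have hprod : ∀ ι : Fin t → Fin n,
      ∏ e ∈ T.edgeFinset,
        Sym2.lift ⟨fun a b => s (ι a) (ι b), fun a b => hsym (ι a) (ι b)⟩ e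
      = ∏ w ∈ E, s (ι (p w)) (ι w) := by
    intro ι
    rw [← himg, Finset.prod_image hinj]
    rfl
  have hnpos : (0:ℝ) < n := by exact_mod_cast hn
  have hB' : ∀ i, ∑ j, s i j ≤ (n : ℝ) * C ^ 2 := by
    intro i
    have := hB i
    rw [div_mul_eq_mul_div, one_mul, div_le_iff₀ hnpos] at this
    linarith
  have hmain := aux_sum_bound hn s hs C hC.le hB' p d E (fun w hw => hd w (hmemE w hw))
  rw [hcardE] at hmain
  simp only [hprod]
  rw [inv_mul_le_iff₀ (by positivity)]
  calc ∑ ι : Fin t → Fin n, ∏ w ∈ E, s (ι (p w)) (ι w)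
      ≤ (n : ℝ) ^ t * C ^ (2 * (t - 1)) := hmain
    _ = (n : ℝ) ^ t * C ^ (2 * (t - 1)) := rfl
end

section
/- Let F_n and G be distribution functions on ℝ with G continuous. If the Stieltjes transforms S_n(z) = ∫ (x − z)^{-1} dF_n(x) converge to S(z) = ∫ (x − z)^{-1} dG(x) for every z in the upper half plane, then sup_x |F_n(x) − G(x)| → 0 as n → ∞. -/
open MeasureTheory Filter Set OnePoint Topology ComplexConjugate
open scoped ENNReal

namespace StieltjesTransformAux

/-- The resolvent function `x ↦ (x - z)⁻¹` extended to the one-point compactification of `ℝ`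
by `0` at `∞`. Junk value `0` if `z` is real. -/
noncomputable def res (z : ℂ) : C(OnePoint ℝ, ℂ) :=
  if hz : z.im ≠ 0 then
    OnePoint.continuousMapMk
      ⟨fun x : ℝ => ((x:ℂ) - z)⁻¹, by
        apply Continuous.inv₀ (by continuity)
        intro x h
        apply hz
        have := congrArg Complex.im h
        simpa using this.symm⟩
      0
      (by
        rw [coclosedCompact_eq_cocompact]
        have h2 : Tendsto (fun x : ℝ => |x| - ‖z‖) (cocompact ℝ) atTop := by
          apply tendsto_atTop_add_const_right
          rw [cocompact_eq_atBot_atTop]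
          exact tendsto_abs_atBot_atTop.sup tendsto_abs_atTop_atTop
        have h1 : Tendsto (fun x : ℝ => ‖(x:ℂ) - z‖) (cocompact ℝ) atTop := by
          apply tendsto_atTop_mono (fun x => ?_) h2
          calc |x| - ‖z‖ = ‖(x:ℂ)‖ - ‖z‖ := by simp
            _ ≤ ‖(x:ℂ) - z‖ := norm_sub_norm_le _ _
        rw [tendsto_zero_iff_norm_tendsto_zero]
        simpa [norm_inv, Pi.inv_def] using h1.inv_tendsto_atTop)
  else 0

lemma res_apply_coe {z : ℂ} (hz : z.im ≠ 0) (x : ℝ) : res z ↑x = ((x:ℂ) - z)⁻¹ := by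
  rw [res, dif_pos hz]; rfl

lemma res_apply_infty (z : ℂ) : res z ∞ = 0 := by
  rw [res]; split
  · rfl
  · rfl

lemma sub_res_ne_zero {z : ℂ} (hz : z.im ≠ 0) (x : ℝ) : ((x:ℂ) - z) ≠ 0 := by
  intro h
  apply hz
  have := congrArg Complex.im h
  simpa using this.symm

lemma norm_res_apply_le {z : ℂ} (hz : z.im ≠ 0) (p : OnePoint ℝ) :
    ‖res z p‖ ≤ |z.im|⁻¹ := by
  induction p using OnePoint.rec with
  | infty => simp [res_apply_infty]
  | coe x =>
    rw [res_apply_coe hz, norm_inv]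
    apply inv_anti₀ (abs_pos.2 hz)
    calc |z.im| = |((x:ℂ) - z).im| := by simp
      _ ≤ ‖(x:ℂ) - z‖ := Complex.abs_im_le_norm _

lemma norm_res_le {z : ℂ} (hz : z.im ≠ 0) : ‖res z‖ ≤ |z.im|⁻¹ :=
  (ContinuousMap.norm_le _ (by positivity)).2 (norm_res_apply_le hz)

/-- Partial fractions identity. -/
lemma res_mul_res {z w : ℂ} (hz : z.im ≠ 0) (hw : w.im ≠ 0) (hzw : z ≠ w) :
    res z * res w = (z - w)⁻¹ • (res z - res w) := by
  ext p
  induction p using OnePoint.rec with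
  | infty => simp [res_apply_infty]
  | coe x =>
    simp only [ContinuousMap.mul_apply, ContinuousMap.smul_apply, ContinuousMap.sub_apply,
      res_apply_coe hz, res_apply_coe hw, smul_eq_mul]
    have h1 := sub_res_ne_zero hz x
    have h2 := sub_res_ne_zero hw x
    have h3 : z - w ≠ 0 := sub_ne_zero.2 hzw
    field_simp
    ring

lemma res_sub_res {z w : ℂ} (hz : z.im ≠ 0) (hw : w.im ≠ 0) (hzw : z ≠ w) :
    res z - res w = (z - w) • (res z * res w) := by
  rw [res_mul_res hz hw hzw, smul_smul, mul_inv_cancel₀ (sub_ne_zero.2 hzw), one_smul]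

lemma star_res {z : ℂ} (hz : z.im ≠ 0) : star (res z) = res (conj z) := by
  have hz' : (conj z).im ≠ 0 := by simpa using hz
  ext p
  induction p using OnePoint.rec with
  | infty => simp [res_apply_infty]
  | coe x =>
    simp only [ContinuousMap.star_apply, res_apply_coe hz, res_apply_coe hz']
    rw [show star (((x:ℂ) - z)⁻¹) = (starRingEnd ℂ) (((x:ℂ) - z)⁻¹) from rfl,
      map_inv₀, map_sub, Complex.conj_ofReal]


/-- The linear span of the constant `1` and the resolvents. -/
noncomputable def W : Submodule ℂ C(OnePoint ℝ, ℂ) :=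
  Submodule.span ℂ ({1} ∪ (res '' {z : ℂ | z.im ≠ 0}))

lemma one_mem_W : (1 : C(OnePoint ℝ, ℂ)) ∈ W :=
  Submodule.subset_span (Or.inl rfl)

lemma res_mem_W {z : ℂ} (hz : z.im ≠ 0) : res z ∈ W :=
  Submodule.subset_span (Or.inr ⟨z, hz, rfl⟩)

lemma star_mem_W {f : C(OnePoint ℝ, ℂ)} (hf : f ∈ W) : star f ∈ W := by
  induction hf using Submodule.span_induction with
  | mem g hg =>
    rcases hg with hg | ⟨z, hz, rfl⟩
    · simp only [mem_singleton_iff] at hg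
      subst hg
      simpa using one_mem_W
    · rw [star_res hz]
      exact res_mem_W (by simpa using hz)
  | zero => simpa using W.zero_mem
  | add x y hx hy ihx ihy => rw [star_add]; exact W.add_mem ihx ihy
  | smul c x hx ihx => rw [star_smul]; exact W.smul_mem _ ihx

/-- The closure of `W`. -/
noncomputable def Wc : Submodule ℂ C(OnePoint ℝ, ℂ) := W.topologicalClosure

lemma W_le_Wc : W ≤ Wc := Submodule.le_topologicalClosure W

lemma isClosed_Wc : IsClosed (Wc : Set C(OnePoint ℝ, ℂ)) :=
  W.isClosed_topologicalClosure

/-- The key analytic step: `res z * res z` lies in the closure of `W`. -/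
lemma res_sq_mem_Wc {z : ℂ} (hz : z.im ≠ 0) : res z * res z ∈ Wc := by
  set t : ℕ → ℝ := fun k => ((k:ℝ)+1)⁻¹ * z.im with ht
  set w : ℕ → ℂ := fun k => z + (t k : ℂ) * Complex.I with hw
  have htne : ∀ k, t k ≠ 0 := fun k =>
    mul_ne_zero (by positivity) hz
  have him : ∀ k, (w k).im = z.im + t k := by
    intro k; simp [hw]
  have himne : ∀ k, (w k).im ≠ 0 := by
    intro k
    rw [him k, ht]
    rcases lt_or_gt_of_ne hz with h | h
    · have : ((k:ℝ)+1)⁻¹ * z.im < 0 := mul_neg_of_pos_of_neg (by positivity) h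
      nlinarith
    · have : 0 < ((k:ℝ)+1)⁻¹ * z.im := mul_pos (by positivity) h
      nlinarith
  have hne : ∀ k, z ≠ w k := by
    intro k h
    have h2 : ((t k : ℂ)) * Complex.I = 0 := by
      have := congrArg (fun u => u - z) h
      simp only [sub_self, hw] at this
      linear_combination -this
    rcases mul_eq_zero.1 h2 with h1 | h1
    · exact htne k (by exact_mod_cast h1)
    · exact Complex.I_ne_zero h1
  -- each approximant is in W
  have hmem : ∀ k, res z * res (w k) ∈ Wc := by
    intro k
    apply W_le_Wc
    rw [res_mul_res hz (himne k) (hne k)]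
    exact W.smul_mem _ (W.sub_mem (res_mem_W hz) (res_mem_W (himne k)))
  -- the approximants converge to `res z * res z`
  have habs : ∀ k, |(w k).im| = |z.im| * |1 + ((k:ℝ)+1)⁻¹| := by
    intro k; rw [him k, ht]; rw [← abs_mul]; congr 1; ring
  have himlb : ∀ k, |z.im| ≤ |(w k).im| := by
    intro k
    rw [habs k]
    nth_rewrite 1 [← mul_one |z.im|]
    apply mul_le_mul_of_nonneg_left _ (abs_nonneg _)
    rw [abs_of_pos (by positivity)]
    have : (0:ℝ) < ((k:ℝ)+1)⁻¹ := by positivity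
    linarith
  set C := |z.im|⁻¹ with hC
  have hconv : Tendsto (fun k => res z * res (w k)) atTop (𝓝 (res z * res z)) := by
    rw [tendsto_iff_norm_sub_tendsto_zero]
    have hub : ∀ k, ‖res z * res (w k) - res z * res z‖
        ≤ ((k:ℝ)+1)⁻¹ * (|z.im| * (C * (C * C))) := by
      intro k
      have hdiff : res z * res (w k) - res z * res z
          = res z * ((w k - z) • (res (w k) * res z)) := by
        rw [← mul_sub, res_sub_res (himne k) hz (Ne.symm (hne k))]
      have h1 : ‖res z‖ ≤ C := norm_res_le hz
      have h2 : ‖res (w k)‖ ≤ C := le_trans (norm_res_le (himne k))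
        (inv_anti₀ (abs_pos.2 hz) (himlb k))
      have h3 : ‖w k - z‖ = ((k:ℝ)+1)⁻¹ * |z.im| := by
        have hwz : w k - z = (t k : ℂ) * Complex.I := by rw [hw]; ring
        rw [hwz, norm_mul, Complex.norm_I, mul_one, Complex.norm_real, Real.norm_eq_abs, ht,
          abs_mul, abs_of_pos (show (0:ℝ) < ((k:ℝ)+1)⁻¹ by positivity)]
      calc ‖res z * res (w k) - res z * res z‖
          = ‖res z * ((w k - z) • (res (w k) * res z))‖ := by rw [hdiff]
        _ ≤ ‖res z‖ * (‖w k - z‖ * (‖res (w k)‖ * ‖res z‖)) := by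
            refine le_trans (norm_mul_le _ _) ?_
            rw [norm_smul]
            apply mul_le_mul_of_nonneg_left _ (norm_nonneg _)
            exact mul_le_mul_of_nonneg_left (norm_mul_le _ _) (norm_nonneg _)
        _ ≤ C * ((((k:ℝ)+1)⁻¹ * |z.im|) * (C * C)) := by
            rw [h3]
            gcongr <;> positivity
        _ = ((k:ℝ)+1)⁻¹ * (|z.im| * (C * (C * C))) := by ring
    have hzero : Tendsto (fun k : ℕ => ((k:ℝ)+1)⁻¹ * (|z.im| * (C * (C * C)))) atTop (𝓝 0) := by
      rw [show (0:ℝ) = 0 * (|z.im| * (C * (C * C))) by ring]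
      apply Tendsto.mul_const
      exact tendsto_inv_atTop_zero.comp (tendsto_atTop_add_const_right _ 1
        tendsto_natCast_atTop_atTop)
    exact squeeze_zero (fun k => norm_nonneg _) hub hzero
  exact isClosed_Wc.mem_of_tendsto hconv (Filter.Eventually.of_forall hmem)


lemma mul_mem_Wc_of_mem_W {f g : C(OnePoint ℝ, ℂ)} (hf : f ∈ W) (hg : g ∈ W) :
    f * g ∈ Wc := by
  induction hf, hg using Submodule.span_induction₂ with
  | mem_mem x y hx hy =>
    rcases hx with hx | ⟨z, hz, rfl⟩
    · simp only [mem_singleton_iff] at hx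
      subst hx
      rw [one_mul]
      exact W_le_Wc (Submodule.subset_span hy)
    · rcases hy with hy | ⟨v, hv, rfl⟩
      · simp only [mem_singleton_iff] at hy
        subst hy
        rw [mul_one]
        exact W_le_Wc (res_mem_W hz)
      · by_cases hzv : z = v
        · subst hzv
          exact res_sq_mem_Wc hz
        · rw [res_mul_res hz hv hzv]
          exact Wc.smul_mem _ (Wc.sub_mem (W_le_Wc (res_mem_W hz)) (W_le_Wc (res_mem_W hv)))
  | zero_left y hy => rw [zero_mul]; exact Wc.zero_mem
  | zero_right x hx => rw [mul_zero]; exact Wc.zero_mem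
  | add_left x y u hx hy hu ih1 ih2 => rw [add_mul]; exact Wc.add_mem ih1 ih2
  | add_right x y u hx hy hu ih1 ih2 => rw [mul_add]; exact Wc.add_mem ih1 ih2
  | smul_left c x y hx hy ih => rw [smul_mul_assoc]; exact Wc.smul_mem _ ih
  | smul_right c x y hx hy ih => rw [mul_smul_comm]; exact Wc.smul_mem _ ih

/-- The closure of `W` as a star subalgebra. -/
noncomputable def A' : StarSubalgebra ℂ C(OnePoint ℝ, ℂ) where
  carrier := (Wc : Set C(OnePoint ℝ, ℂ))
  mul_mem' := by
    intro a b ha hb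
    have : a * b ∈ closure (Wc : Set C(OnePoint ℝ, ℂ)) := by
      apply map_mem_closure₂ continuous_mul
        (by rwa [show closure (W : Set C(OnePoint ℝ, ℂ)) = (Wc : Set C(OnePoint ℝ, ℂ)) from rfl])
        (by rwa [show closure (W : Set C(OnePoint ℝ, ℂ)) = (Wc : Set C(OnePoint ℝ, ℂ)) from rfl])
      exact fun f hf g hg => mul_mem_Wc_of_mem_W hf hg
    rwa [isClosed_Wc.closure_eq] at this
  one_mem' := W_le_Wc one_mem_W
  add_mem' := fun ha hb => Wc.add_mem ha hb
  zero_mem' := Wc.zero_mem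
  algebraMap_mem' := by
    intro c
    have : algebraMap ℂ C(OnePoint ℝ, ℂ) c = c • (1 : C(OnePoint ℝ, ℂ)) := by
      rw [Algebra.algebraMap_eq_smul_one]
    rw [this]
    exact Wc.smul_mem _ (W_le_Wc one_mem_W)
  star_mem' := by
    intro a ha
    have h1 : star a ∈ closure (Wc : Set C(OnePoint ℝ, ℂ)) := by
      apply map_mem_closure continuous_star
        (by rwa [show closure (W : Set C(OnePoint ℝ, ℂ)) = (Wc : Set C(OnePoint ℝ, ℂ)) from rfl])
      intro f hf
      exact W_le_Wc (star_mem_W hf)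
    rwa [isClosed_Wc.closure_eq] at h1

lemma A'_separatesPoints : A'.SeparatesPoints := by
  intro p q hpq
  refine ⟨_, ⟨res Complex.I, W_le_Wc (res_mem_W (by simp)), rfl⟩, ?_⟩
  have hIim : (Complex.I).im ≠ 0 := by simp
  show res Complex.I p ≠ res Complex.I q
  have hval : ∀ x : ℝ, res Complex.I ↑x ≠ 0 := fun x => by
    rw [res_apply_coe hIim]
    exact inv_ne_zero (sub_res_ne_zero hIim x)
  induction p using OnePoint.rec with
  | infty =>
    induction q using OnePoint.rec with
    | infty => exact absurd rfl hpq
    | coe y =>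
      rw [res_apply_infty]
      exact fun h => hval y h.symm
  | coe x =>
    induction q using OnePoint.rec with
    | infty =>
      rw [res_apply_infty]
      exact hval x
    | coe y =>
      rw [res_apply_coe hIim, res_apply_coe hIim]
      intro h
      apply hpq
      have := inv_injective h
      have hxy : ((x:ℂ)) = ((y:ℂ)) := by linear_combination this
      norm_cast at hxy
      exact congrArg _ hxy

lemma mem_closure_W (f : C(OnePoint ℝ, ℂ)) : f ∈ Wc := by
  have hSW := ContinuousMap.starSubalgebra_topologicalClosure_eq_top_of_separatesPoints A'
    A'_separatesPoints
  have hf : f ∈ A'.topologicalClosure := by rw [hSW]; trivial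
  have : f ∈ closure (A' : Set C(OnePoint ℝ, ℂ)) := hf
  rwa [show (A' : Set C(OnePoint ℝ, ℂ)) = (Wc : Set C(OnePoint ℝ, ℂ)) from rfl,
    isClosed_Wc.closure_eq] at this


/-- `f` restricted to `ℝ`, as a bounded continuous function. -/
noncomputable def Φ (f : C(OnePoint ℝ, ℂ)) : BoundedContinuousFunction ℝ ℂ :=
  BoundedContinuousFunction.ofNormedAddCommGroup (fun x : ℝ => f ↑x)
    (f.continuous.comp OnePoint.continuous_coe) ‖f‖ (fun x => f.norm_coe_le_norm ↑x)

lemma norm_Φ_le (f : C(OnePoint ℝ, ℂ)) : ‖Φ f‖ ≤ ‖f‖ :=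
  BoundedContinuousFunction.norm_ofNormedAddCommGroup_le _ (norm_nonneg f) _

lemma integrable_comp (f : C(OnePoint ℝ, ℂ)) (m : Measure ℝ) [IsFiniteMeasure m] :
    Integrable (fun x : ℝ => f ↑x) m :=
  (Φ f).integrable m


/-- A trapezoid function: `0` outside `[a,d]`, `1` on `[b,c]`, linear in between. -/
noncomputable def trap (a b c d : ℝ) (x : ℝ) : ℝ :=
  min (max ((x - a) / (b - a)) 0) 1 * min (max ((d - x) / (d - c)) 0) 1

lemma trap_nonneg (a b c d x : ℝ) : 0 ≤ trap a b c d x := by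
  apply mul_nonneg <;>
  · apply le_min (le_max_right _ _) zero_le_one

lemma trap_le_one (a b c d x : ℝ) : trap a b c d x ≤ 1 := by
  apply mul_le_one₀ (min_le_right _ _) _ (min_le_right _ _)
  exact le_min (le_max_right _ _) zero_le_one

lemma trap_eq_one {a b c d x : ℝ} (hab : a < b) (hcd : c < d) (hb : b ≤ x) (hc : x ≤ c) :
    trap a b c d x = 1 := by
  have h1 : (1:ℝ) ≤ (x - a) / (b - a) := by
    rw [le_div_iff₀ (by linarith)]
    linarith
  have h2 : (1:ℝ) ≤ (d - x) / (d - c) := by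
    rw [le_div_iff₀ (by linarith)]
    linarith
  rw [trap, max_eq_left (by linarith), max_eq_left (by linarith),
    min_eq_right h1, min_eq_right h2, one_mul]

lemma trap_eq_zero_left {a b c d x : ℝ} (hab : a < b) (hx : x ≤ a) : trap a b c d x = 0 := by
  have h1 : (x - a) / (b - a) ≤ 0 := div_nonpos_of_nonpos_of_nonneg (by linarith) (by linarith)
  rw [trap, max_eq_right h1, min_eq_left zero_le_one, zero_mul]

lemma trap_eq_zero_right {a b c d x : ℝ} (hcd : c < d) (hx : d ≤ x) : trap a b c d x = 0 := by
  have h1 : (d - x) / (d - c) ≤ 0 := div_nonpos_of_nonpos_of_nonneg (by linarith) (by linarith)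
  rw [trap, max_eq_right h1, min_eq_left zero_le_one, mul_zero]

lemma trap_continuous (a b c d : ℝ) : Continuous (trap a b c d) := by
  apply Continuous.mul
  · exact (((continuous_id.sub continuous_const).div_const _).max continuous_const).min
      continuous_const
  · exact (((continuous_const.sub continuous_id).div_const _).max continuous_const).min
      continuous_const

lemma trap_integrable {a b c d : ℝ} (hab : a < b) (hcd : c < d) (m : Measure ℝ)
    [IsProbabilityMeasure m] : Integrable (trap a b c d) m := by
  apply (trap_continuous a b c d).integrable_of_hasCompactSupport
  apply HasCompactSupport.intro (isCompact_Icc (a := a) (b := d))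
  intro x hx
  simp only [mem_Icc, not_and_or, not_le] at hx
  rcases hx with h | h
  · exact trap_eq_zero_left hab h.le
  · exact trap_eq_zero_right hcd h.le

lemma indicator_integrable (s : Set ℝ) (hs : MeasurableSet s) (m : Measure ℝ)
    [IsProbabilityMeasure m] : Integrable (s.indicator (fun _ => (1:ℝ))) m := by
  rw [integrable_indicator_iff hs]
  exact integrableOn_const (measure_ne_top _ _) (by simp)

lemma integral_indicator_Iic (r : ℝ) (m : Measure ℝ) [IsProbabilityMeasure m] :
    ∫ x, (Iic r).indicator (fun _ => (1:ℝ)) x ∂m = (m (Iic r)).toReal := by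
  rw [integral_indicator_const _ measurableSet_Iic]
  simp
  rfl

/-- T1 : `∫ trap ≤ m(Iic d)` -/
lemma integral_trap_le {a b c d : ℝ} (hab : a < b) (hcd : c < d) (m : Measure ℝ)
    [IsProbabilityMeasure m] : ∫ x, trap a b c d x ∂m ≤ (m (Iic d)).toReal := by
  rw [← integral_indicator_Iic d m]
  apply integral_mono (trap_integrable hab hcd m) (indicator_integrable _ measurableSet_Iic m)
  intro x
  by_cases hx : x ≤ d
  · simp only [indicator_of_mem (mem_Iic.2 hx)]
    exact trap_le_one _ _ _ _ _
  · push_neg at hx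
    simp only [indicator_of_notMem (fun h => absurd (mem_Iic.1 h) (not_le.2 hx))]
    rw [trap_eq_zero_right hcd hx.le]

/-- T2 : `m(Iic c) ≤ ∫ trap + m(Iic b)` -/
lemma le_integral_trap_add {a b c d : ℝ} (hab : a < b) (hbc : b ≤ c) (hcd : c < d)
    (m : Measure ℝ) [IsProbabilityMeasure m] :
    (m (Iic c)).toReal ≤ (∫ x, trap a b c d x ∂m) + (m (Iic b)).toReal := by
  rw [← integral_indicator_Iic c m, ← integral_indicator_Iic b m,
    ← integral_add (trap_integrable hab hcd m) (indicator_integrable _ measurableSet_Iic m)]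
  apply integral_mono (indicator_integrable _ measurableSet_Iic m)
    ((trap_integrable hab hcd m).add (indicator_integrable _ measurableSet_Iic m))
  intro x
  simp only [Pi.add_apply]
  have htn := trap_nonneg a b c d x
  by_cases hxb : x ≤ b
  · simp only [indicator_of_mem (mem_Iic.2 hxb)]
    have h1 : (Iic c).indicator (fun _ => (1:ℝ)) x ≤ 1 :=
      indicator_le' (fun _ _ => le_refl _) (fun _ _ => zero_le_one) x
    linarith
  · push_neg at hxb
    simp only [indicator_of_notMem (fun h => absurd (mem_Iic.1 h) (not_le.2 hxb))]
    by_cases hxc : x ≤ c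
    · simp only [indicator_of_mem (mem_Iic.2 hxc)]
      rw [trap_eq_one hab hcd hxb.le hxc]
      linarith
    · push_neg at hxc
      simp only [indicator_of_notMem (fun h => absurd (mem_Iic.1 h) (not_le.2 hxc))]
      linarith

/-- T3 : `m(Iic c) - m(Iic b) ≤ ∫ trap` -/
lemma sub_le_integral_trap {a b c d : ℝ} (hab : a < b) (hbc : b ≤ c) (hcd : c < d)
    (m : Measure ℝ) [IsProbabilityMeasure m] :
    (m (Iic c)).toReal - (m (Iic b)).toReal ≤ ∫ x, trap a b c d x ∂m := by
  rw [← integral_indicator_Iic c m, ← integral_indicator_Iic b m,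
    ← integral_sub (indicator_integrable _ measurableSet_Iic m)
      (indicator_integrable _ measurableSet_Iic m)]
  apply integral_mono ((indicator_integrable _ measurableSet_Iic m).sub
    (indicator_integrable _ measurableSet_Iic m)) (trap_integrable hab hcd m)
  intro x
  simp only [Pi.sub_apply]
  have htn := trap_nonneg a b c d x
  by_cases hxb : x ≤ b
  · simp only [indicator_of_mem (mem_Iic.2 hxb), indicator_of_mem (mem_Iic.2 (hxb.trans hbc))]
    linarith
  · push_neg at hxb
    simp only [indicator_of_notMem (fun h => absurd (mem_Iic.1 h) (not_le.2 hxb))]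
    by_cases hxc : x ≤ c
    · simp only [indicator_of_mem (mem_Iic.2 hxc)]
      rw [trap_eq_one hab hcd hxb.le hxc]
      linarith
    · push_neg at hxc
      simp only [indicator_of_notMem (fun h => absurd (mem_Iic.1 h) (not_le.2 hxc))]
      linarith


/-- cdf of a probability measure tends to `0` at `-∞` -/
lemma cdf_tendsto_atBot (m : Measure ℝ) [IsProbabilityMeasure m] :
    Tendsto (fun r : ℝ => (m (Iic r)).toReal) atBot (𝓝 0) := by
  have h : Tendsto (fun r : ℝ => m (Iic r)) atBot (𝓝 (m (⋂ r : ℝ, Iic r))) :=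
    tendsto_measure_iInter_atBot (fun r => measurableSet_Iic.nullMeasurableSet)
      (fun i j h => Iic_subset_Iic.2 h) ⟨0, measure_ne_top _ _⟩
  have he : (⋂ r : ℝ, Iic r) = ∅ := by
    ext x
    simp only [mem_iInter, mem_Iic, mem_empty_iff_false, iff_false, not_forall]
    exact ⟨x - 1, by linarith⟩
  rw [he, measure_empty] at h
  have := (ENNReal.tendsto_toReal (by simp)).comp h
  simpa [Function.comp_def] using this

/-- cdf of a probability measure tends to `1` at `+∞` -/
lemma cdf_tendsto_atTop (m : Measure ℝ) [IsProbabilityMeasure m] :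
    Tendsto (fun r : ℝ => (m (Iic r)).toReal) atTop (𝓝 1) := by
  have h : Tendsto (fun r : ℝ => m (Iic r)) atTop (𝓝 (m univ)) :=
    tendsto_measure_Iic_atTop m
  rw [measure_univ] at h
  have := (ENNReal.tendsto_toReal (by simp)).comp h
  simpa [Function.comp_def] using this

lemma cdf_mono (m : Measure ℝ) [IsProbabilityMeasure m] {x y : ℝ} (h : x ≤ y) :
    (m (Iic x)).toReal ≤ (m (Iic y)).toReal :=
  ENNReal.toReal_mono (measure_ne_top _ _) (measure_mono (Iic_subset_Iic.2 h))

lemma cdf_nonneg (m : Measure ℝ) (x : ℝ) : 0 ≤ (m (Iic x)).toReal := ENNReal.toReal_nonneg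

lemma cdf_le_one (m : Measure ℝ) [IsProbabilityMeasure m] (x : ℝ) :
    (m (Iic x)).toReal ≤ 1 := by
  have : m (Iic x) ≤ 1 := prob_le_one
  calc (m (Iic x)).toReal ≤ (1 : ℝ≥0∞).toReal := ENNReal.toReal_mono (by simp) this
    _ = 1 := by simp


section main
variable (μ : ℕ → Measure ℝ) [∀ n, IsProbabilityMeasure (μ n)]
    (ν : Measure ℝ) [IsProbabilityMeasure ν]

lemma tendsto_integral_W
    (hS : ∀ z : ℂ, 0 < z.im →
      Tendsto (fun n => ∫ x : ℝ, ((x : ℂ) - z)⁻¹ ∂(μ n)) atTop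
        (nhds (∫ x : ℝ, ((x : ℂ) - z)⁻¹ ∂ν)))
    {f : C(OnePoint ℝ, ℂ)} (hf : f ∈ W) :
    Tendsto (fun n => ∫ x : ℝ, f ↑x ∂(μ n)) atTop (𝓝 (∫ x : ℝ, f ↑x ∂ν)) := by
  induction hf using Submodule.span_induction with
  | mem g hg =>
    rcases hg with hg | ⟨z, hz, rfl⟩
    · simp only [mem_singleton_iff] at hg
      subst hg
      simp only [ContinuousMap.one_apply]
      simp only [integral_const, probReal_univ, one_smul]
      exact tendsto_const_nhds
    · simp only [mem_setOf_eq] at hz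
      simp only [res_apply_coe hz]
      rcases lt_or_gt_of_ne hz with hneg | hpos
      · -- z.im < 0 : use conjugates
        set v := conj z with hv
        have hvim : 0 < v.im := by simpa [hv] using hneg
        have h := hS v hvim
        have h2 := ((Complex.continuous_conj).tendsto _).comp h
        have hx : ∀ (m : Measure ℝ), conj (∫ x : ℝ, ((x:ℂ) - v)⁻¹ ∂m)
            = ∫ x : ℝ, ((x:ℂ) - z)⁻¹ ∂m := by
          intro m
          rw [← integral_conj]
          congr 1
          funext x
          rw [map_inv₀, map_sub, Complex.conj_ofReal, hv, Complex.conj_conj]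
        simpa only [Function.comp_def, hx] using h2
      · exact hS z hpos
  | zero => simpa using tendsto_const_nhds
  | add x y hx hy ihx ihy =>
    simp only [ContinuousMap.add_apply]
    have hi : ∀ (m : Measure ℝ) [IsProbabilityMeasure m],
        ∫ t : ℝ, (x ↑t + y ↑t) ∂m = (∫ t : ℝ, x ↑t ∂m) + ∫ t : ℝ, y ↑t ∂m := fun m _ =>
      integral_add (integrable_comp x m) (integrable_comp y m)
    simp only [hi]
    exact ihx.add ihy
  | smul c x hx ihx =>
    simp only [ContinuousMap.smul_apply, integral_smul]
    exact ihx.const_smul c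

lemma tendsto_integral_all
    (hS : ∀ z : ℂ, 0 < z.im →
      Tendsto (fun n => ∫ x : ℝ, ((x : ℂ) - z)⁻¹ ∂(μ n)) atTop
        (nhds (∫ x : ℝ, ((x : ℂ) - z)⁻¹ ∂ν)))
    (f : C(OnePoint ℝ, ℂ)) :
    Tendsto (fun n => ∫ x : ℝ, f ↑x ∂(μ n)) atTop (𝓝 (∫ x : ℝ, f ↑x ∂ν)) := by
  rw [Metric.tendsto_atTop]
  intro ε hε
  have hclos : f ∈ closure (W : Set C(OnePoint ℝ, ℂ)) := mem_closure_W f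
  obtain ⟨w, hwW, hwd⟩ := Metric.mem_closure_iff.1 hclos (ε/4) (by linarith)
  have hdiff : ∀ (m : Measure ℝ) [IsProbabilityMeasure m],
      dist (∫ x : ℝ, f ↑x ∂m) (∫ x : ℝ, w ↑x ∂m) ≤ ε/4 := by
    intro m _
    rw [dist_eq_norm, ← integral_sub (integrable_comp f m) (integrable_comp w m)]
    have : ∀ x : ℝ, f ↑x - w ↑x = (Φ (f - w)) x := fun x => rfl
    simp only [this]
    calc ‖∫ x : ℝ, (Φ (f - w)) x ∂m‖ ≤ ‖Φ (f - w)‖ :=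
          BoundedContinuousFunction.norm_integral_le_norm (μ := m) _
      _ ≤ ‖f - w‖ := norm_Φ_le _
      _ ≤ ε/4 := by rw [← dist_eq_norm]; exact hwd.le
  have hW := tendsto_integral_W μ ν hS hwW
  rw [Metric.tendsto_atTop] at hW
  obtain ⟨N, hN⟩ := hW (ε/4) (by linarith)
  refine ⟨N, fun n hn => ?_⟩
  calc dist (∫ x : ℝ, f ↑x ∂(μ n)) (∫ x : ℝ, f ↑x ∂ν)
      ≤ dist (∫ x : ℝ, f ↑x ∂(μ n)) (∫ x : ℝ, w ↑x ∂(μ n))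
        + dist (∫ x : ℝ, w ↑x ∂(μ n)) (∫ x : ℝ, w ↑x ∂ν)
        + dist (∫ x : ℝ, w ↑x ∂ν) (∫ x : ℝ, f ↑x ∂ν) := dist_triangle4 _ _ _ _
    _ < ε/4 + ε/4 + ε/4 := by
        apply add_lt_add_of_lt_of_le
        apply add_lt_add_of_le_of_lt (hdiff (μ n)) (hN n hn)
        rw [dist_comm]; exact hdiff ν
    _ < ε := by linarith

lemma tendsto_integral_compactSupport
    (hS : ∀ z : ℂ, 0 < z.im →
      Tendsto (fun n => ∫ x : ℝ, ((x : ℂ) - z)⁻¹ ∂(μ n)) atTop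
        (nhds (∫ x : ℝ, ((x : ℂ) - z)⁻¹ ∂ν)))
    (g : ℝ → ℝ) (hg : Continuous g) (a b : ℝ) (h0 : ∀ x ∉ Icc a b, g x = 0) :
    Tendsto (fun n => ∫ x, g x ∂(μ n)) atTop (𝓝 (∫ x, g x ∂ν)) := by
  have hten : Tendsto (fun x : ℝ => ((g x : ℂ))) (coclosedCompact ℝ) (𝓝 0) := by
    apply Tendsto.congr' _ tendsto_const_nhds
    have hmem : (Icc a b)ᶜ ∈ coclosedCompact ℝ := by
      rw [Filter.hasBasis_coclosedCompact.mem_iff]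
      exact ⟨Icc a b, ⟨isClosed_Icc, isCompact_Icc⟩, subset_rfl⟩
    filter_upwards [hmem] with x hx
    simp [h0 x hx]
  set fC : C(OnePoint ℝ, ℂ) :=
    OnePoint.continuousMapMk ⟨fun x : ℝ => ((g x : ℂ)), by continuity⟩ 0 hten with hfC
  have hAll := tendsto_integral_all μ ν hS fC
  have heq : ∀ (m : Measure ℝ), ∫ x : ℝ, fC ↑x ∂m = ((∫ x, g x ∂m : ℝ) : ℂ) := by
    intro m
    rw [show (fun x : ℝ => fC ↑x) = fun x : ℝ => ((g x : ℂ)) from rfl]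
    exact integral_ofReal
  simp only [heq] at hAll
  have := (Complex.continuous_re.tendsto _).comp hAll
  simpa [Function.comp_def] using this


/-- Tightness of the lower tails, derived from convergence against compactly
supported functions. -/
lemma lower_tail_small
    (hS : ∀ z : ℂ, 0 < z.im →
      Tendsto (fun n => ∫ x : ℝ, ((x : ℂ) - z)⁻¹ ∂(μ n)) atTop
        (nhds (∫ x : ℝ, ((x : ℂ) - z)⁻¹ ∂ν)))
    {ε : ℝ} (hε : 0 < ε) (x₀ : ℝ) :
    ∃ R : ℝ, R ≤ x₀ ∧ (∀ᶠ n in atTop, (μ n (Iic R)).toReal ≤ ε) ∧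
      (ν (Iic R)).toReal ≤ ε := by
  -- choose r with small ν-tail and t with large ν-mass
  obtain ⟨r, hr⟩ := (((cdf_tendsto_atBot ν).eventually (eventually_le_nhds
    (show (0:ℝ) < ε/3 by linarith))).and (eventually_le_atBot (x₀ - 1))).exists
  obtain ⟨t, ht⟩ := (((cdf_tendsto_atTop ν).eventually (eventually_ge_nhds
    (show 1 - ε/3 < 1 by linarith))).and (eventually_ge_atTop r)).exists
  -- the trapezoid g with nodes (r-1, r, t, t+1)
  set g := trap (r-1) r t (t+1) with hg
  have hab : r - 1 < r := by linarith
  have hcd : t < t + 1 := by linarith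
  have hg0 : ∀ x ∉ Icc (r-1) (t+1), g x = 0 := by
    intro x hx
    simp only [mem_Icc, not_and_or, not_le] at hx
    rcases hx with h | h
    · exact trap_eq_zero_left hab h.le
    · exact trap_eq_zero_right hcd h.le
  have hconv := tendsto_integral_compactSupport μ ν hS g (trap_continuous _ _ _ _) _ _ hg0
  -- ∫ g dν ≥ 1 - 2ε/3
  have hνg : 1 - 2*ε/3 ≤ ∫ x, g x ∂ν := by
    have h1 := sub_le_integral_trap hab ht.2 hcd ν
    have h2 : 1 - ε/3 ≤ (ν (Iic t)).toReal := ht.1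
    have h3 : (ν (Iic r)).toReal ≤ ε/3 := hr.1
    linarith
  -- eventually ∫ g dμ n ≥ 1 - ε
  have hev : ∀ᶠ n in atTop, 1 - ε ≤ ∫ x, g x ∂(μ n) := by
    have := hconv.eventually (eventually_ge_nhds (show 1 - ε < ∫ x, g x ∂ν by
      have : 0 < ε/3 := by linarith
      linarith))
    filter_upwards [this] with n hn using hn
  refine ⟨r - 1, by linarith [hr.2], ?_, ?_⟩
  · filter_upwards [hev] with n hn
    -- pointwise : indicator (Iic (r-1)) + g ≤ 1
    have hpt : ∀ x, (Iic (r-1)).indicator (fun _ => (1:ℝ)) x + g x ≤ 1 := by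
      intro x
      rw [hg]
      by_cases hx : x ≤ r - 1
      · rw [indicator_of_mem (mem_Iic.2 hx), trap_eq_zero_left hab hx]
        norm_num
      · rw [indicator_of_notMem (fun h => absurd (mem_Iic.1 h) hx)]
        simpa using trap_le_one (r-1) r t (t+1) x
    have hint : (μ n (Iic (r-1))).toReal + ∫ x, g x ∂(μ n) ≤ 1 := by
      rw [← integral_indicator_Iic (r-1) (μ n),
        ← integral_add (indicator_integrable _ measurableSet_Iic _) (trap_integrable hab hcd _)]
      calc ∫ x, ((Iic (r-1)).indicator (fun _ => (1:ℝ)) x + g x) ∂(μ n)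
          ≤ ∫ _x, (1:ℝ) ∂(μ n) := by
            apply integral_mono ((indicator_integrable _ measurableSet_Iic _).add
              (trap_integrable hab hcd _)) (integrable_const 1)
            exact hpt
        _ = 1 := by simp
    linarith
  · calc (ν (Iic (r-1))).toReal ≤ (ν (Iic r)).toReal := cdf_mono ν (by linarith)
      _ ≤ ε := by linarith [hr.1]


/-- Pointwise convergence of the cdfs. -/
lemma cdf_tendsto_pointwise
    (hGcont : Continuous fun x : ℝ => (ν (Set.Iic x)).toReal)
    (hS : ∀ z : ℂ, 0 < z.im →
      Tendsto (fun n => ∫ x : ℝ, ((x : ℂ) - z)⁻¹ ∂(μ n)) atTop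
        (nhds (∫ x : ℝ, ((x : ℂ) - z)⁻¹ ∂ν)))
    (x : ℝ) :
    Tendsto (fun n => (μ n (Iic x)).toReal) atTop (𝓝 ((ν (Iic x)).toReal)) := by
  rw [Metric.tendsto_nhds]
  intro ε hε
  set G : ℝ → ℝ := fun y => (ν (Iic y)).toReal with hG
  -- continuity at x : pick δ > 0
  have hcont : ContinuousAt G x := hGcont.continuousAt
  rw [Metric.continuousAt_iff] at hcont
  obtain ⟨δ₀, hδ₀, hδ⟩ := hcont (ε/4) (by linarith)
  set δ := δ₀ / 2 with hδdef
  have hδpos : 0 < δ := by positivity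
  have hGup : G (x + δ) ≤ G x + ε/4 := by
    have h1 : dist (x + δ) x < δ₀ := by
      rw [Real.dist_eq, abs_of_pos (by linarith : (0:ℝ) < x + δ - x)]
      linarith
    have h2 := hδ h1
    rw [Real.dist_eq] at h2
    have := abs_lt.1 h2
    linarith [this.2]
  have hGdown : G x - ε/4 ≤ G (x - δ) := by
    have h1 : dist (x - δ) x < δ₀ := by
      rw [Real.dist_eq, abs_of_neg (by linarith : x - δ - x < 0)]
      linarith
    have h2 := hδ h1
    rw [Real.dist_eq] at h2
    have := abs_lt.1 h2
    linarith [this.1]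
  -- tightness
  obtain ⟨R, hRle, hRμ, hRν⟩ := lower_tail_small μ ν hS (show (0:ℝ) < ε/4 by linarith)
    (x - δ - 1)
  have hRx : R < x - δ := by linarith
  -- the two trapezoids
  have hab : R - 1 < R := by linarith
  have hup := tendsto_integral_compactSupport μ ν hS (trap (R-1) R x (x+δ))
    (trap_continuous _ _ _ _) (R-1) (x+δ) (fun y hy => by
      simp only [mem_Icc, not_and_or, not_le] at hy
      rcases hy with h | h
      · exact trap_eq_zero_left hab h.le
      · exact trap_eq_zero_right (by linarith) h.le)
  have hdown := tendsto_integral_compactSupport μ ν hS (trap (R-1) R (x-δ) x)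
    (trap_continuous _ _ _ _) (R-1) x (fun y hy => by
      simp only [mem_Icc, not_and_or, not_le] at hy
      rcases hy with h | h
      · exact trap_eq_zero_left hab h.le
      · exact trap_eq_zero_right (by linarith) h.le)
  have hevup : ∀ᶠ n in atTop,
      (∫ y, trap (R-1) R x (x+δ) y ∂(μ n)) < (∫ y, trap (R-1) R x (x+δ) y ∂ν) + ε/4 :=
    hup.eventually (eventually_lt_nhds (lt_add_of_pos_right _ (by linarith)))
  have hevdown : ∀ᶠ n in atTop,
      (∫ y, trap (R-1) R (x-δ) x y ∂ν) - ε/4 < ∫ y, trap (R-1) R (x-δ) x y ∂(μ n) :=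
    hdown.eventually (eventually_gt_nhds (by linarith))
  filter_upwards [hevup, hevdown, hRμ] with n h1 h2 h3
  -- upper bound
  have hu1 : (μ n (Iic x)).toReal
      ≤ (∫ y, trap (R-1) R x (x+δ) y ∂(μ n)) + (μ n (Iic R)).toReal :=
    le_integral_trap_add hab (by linarith) (by linarith) (μ n)
  have hu2 : (∫ y, trap (R-1) R x (x+δ) y ∂ν) ≤ G (x + δ) :=
    integral_trap_le hab (by linarith) ν
  -- lower bound
  have hl1 : (∫ y, trap (R-1) R (x-δ) x y ∂(μ n)) ≤ (μ n (Iic x)).toReal :=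
    integral_trap_le hab (by linarith) (μ n)
  have hl2 : G (x - δ) - (ν (Iic R)).toReal ≤ ∫ y, trap (R-1) R (x-δ) x y ∂ν :=
    sub_le_integral_trap hab (by linarith) (by linarith) ν
  rw [Real.dist_eq, abs_lt]
  constructor
  · -- -ε < F n x - G x
    have : G x - 3*(ε/4) < (μ n (Iic x)).toReal := by linarith
    linarith
  · have : (μ n (Iic x)).toReal < G x + 3*(ε/4) := by linarith
    linarith


lemma cdf_surj (hGcont : Continuous fun x : ℝ => (ν (Set.Iic x)).toReal)
    {y : ℝ} (h0 : 0 < y) (h1 : y < 1) : ∃ t, (ν (Iic t)).toReal = y := by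
  obtain ⟨a, ha⟩ := ((cdf_tendsto_atBot ν).eventually (eventually_lt_nhds h0)).exists
  obtain ⟨b, hb⟩ := ((cdf_tendsto_atTop ν).eventually (eventually_gt_nhds h1)).exists
  have hab : a ≤ b := by
    by_contra hba
    push_neg at hba
    have := cdf_mono ν hba.le
    linarith
  have := intermediate_value_Icc hab (hGcont.continuousOn)
  obtain ⟨t, _, ht⟩ := this ⟨ha.le, hb.le⟩
  exact ⟨t, ht⟩


end main
end StieltjesTransformAux

open StieltjesTransformAux in
theorem stieltjes_transform_convergence_implies_uniform_cdf_convergence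
    (μ : ℕ → Measure ℝ) [∀ n, IsProbabilityMeasure (μ n)]
    (ν : Measure ℝ) [IsProbabilityMeasure ν]
    (hGcont : Continuous fun x : ℝ => (ν (Set.Iic x)).toReal)
    (hS : ∀ z : ℂ, 0 < z.im →
      Tendsto (fun n => ∫ x : ℝ, ((x : ℂ) - z)⁻¹ ∂(μ n)) atTop
        (nhds (∫ x : ℝ, ((x : ℂ) - z)⁻¹ ∂ν))) :
    Tendsto (fun n => ⨆ x : ℝ,
        |(μ n (Set.Iic x)).toReal - (ν (Set.Iic x)).toReal|) atTop (nhds 0) := by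

  rw [Metric.tendsto_nhds]
  intro ε hε
  -- grid size
  set m : ℕ := max 2 ⌈3/ε⌉₊ with hm
  have hm2 : 2 ≤ m := le_max_left _ _
  have hm0 : (0:ℝ) < m := by positivity
  have hmε : 1/(m:ℝ) ≤ ε/3 := by
    have h1 : 3/ε ≤ (⌈3/ε⌉₊ : ℝ) := Nat.le_ceil _
    have h2 : ((⌈3/ε⌉₊ : ℕ) : ℝ) ≤ (m:ℝ) := by
      exact_mod_cast Nat.cast_le.2 (le_max_right 2 _)
    have h3 : 3/ε ≤ (m:ℝ) := le_trans h1 h2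
    rw [div_le_iff₀ hε] at h3
    rw [div_le_div_iff₀ hm0 (by norm_num : (0:ℝ) < 3)]
    nlinarith
  -- the grid
  have hex : ∀ i : ℕ, ∃ s : ℝ, i < m - 1 → (ν (Iic s)).toReal = ((i:ℝ)+1)/m := by
    intro i
    by_cases hi : i < m - 1
    · have h0 : (0:ℝ) < ((i:ℝ)+1)/m := by positivity
      have h1 : ((i:ℝ)+1)/m < 1 := by
        rw [div_lt_one hm0]
        have : (i:ℝ) + 1 ≤ (m:ℝ) - 1 := by
          have : (i + 1 : ℕ) ≤ m - 1 := hi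
          have h4 : ((i+1:ℕ):ℝ) ≤ ((m - 1:ℕ):ℝ) := Nat.cast_le.2 this
          rw [Nat.cast_sub (by omega)] at h4
          push_cast at h4 ⊢
          linarith
        linarith
      obtain ⟨s, hs⟩ := cdf_surj ν hGcont h0 h1
      exact ⟨s, fun _ => hs⟩
    · exact ⟨0, fun h => absurd h hi⟩
  choose t ht using hex
  -- eventually all grid points are close
  have hev : ∀ᶠ n in atTop, ∀ i ∈ Finset.range (m-1),
      |(μ n (Iic (t i))).toReal - (ν (Iic (t i))).toReal| < ε/3 := by
    rw [eventually_all_finset]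
    intro i _
    have hpt := cdf_tendsto_pointwise μ ν hGcont hS (t i)
    rw [Metric.tendsto_nhds] at hpt
    have := hpt (ε/3) (by linarith)
    filter_upwards [this] with n hn
    rwa [Real.dist_eq] at hn
  filter_upwards [hev] with n hn
  -- the key pointwise bound
  have key : ∀ x : ℝ, |(μ n (Iic x)).toReal - (ν (Iic x)).toReal| ≤ ε/3 + 1/m := by
    intro x
    have hF0 := cdf_nonneg (μ n) x
    have hF1 := cdf_le_one (μ n) x
    have hG0 := cdf_nonneg ν x
    have hG1 := cdf_le_one ν x
    set s : Finset ℕ := (Finset.range (m-1)).filter (fun i => t i ≤ x) with hsdef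
    by_cases hs : s.Nonempty
    · set i₀ : ℕ := s.max' hs with hi₀def
      have hi₀mem : i₀ ∈ s := s.max'_mem hs
      rw [hsdef, Finset.mem_filter, Finset.mem_range] at hi₀mem
      obtain ⟨hi₀r, hti₀⟩ := hi₀mem
      have hGt : (ν (Iic (t i₀))).toReal = ((i₀:ℝ)+1)/m := ht i₀ hi₀r
      have hclose := hn i₀ (Finset.mem_range.2 hi₀r)
      by_cases hlast : i₀ + 1 < m - 1
      · -- interior case
        have hnot : ¬ t (i₀+1) ≤ x := by
          intro h
          have hmem : i₀ + 1 ∈ s := by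
            rw [hsdef, Finset.mem_filter, Finset.mem_range]
            exact ⟨hlast, h⟩
          have := s.le_max' _ hmem
          omega
        push_neg at hnot
        have hGt1 : (ν (Iic (t (i₀+1)))).toReal = ((i₀:ℝ)+2)/m := by
          have := ht (i₀+1) hlast
          rw [this]
          push_cast
          ring_nf
        have hgap : (ν (Iic (t (i₀+1)))).toReal - (ν (Iic (t i₀))).toReal = 1/m := by
          rw [hGt1, hGt]; ring
        have hclose1 := hn (i₀+1) (Finset.mem_range.2 hlast)
        have hFub : (μ n (Iic x)).toReal ≤ (μ n (Iic (t (i₀+1)))).toReal :=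
          cdf_mono (μ n) hnot.le
        have hFlb : (μ n (Iic (t i₀))).toReal ≤ (μ n (Iic x)).toReal :=
          cdf_mono (μ n) hti₀
        have hGub : (ν (Iic x)).toReal ≤ (ν (Iic (t (i₀+1)))).toReal :=
          cdf_mono ν hnot.le
        have hGlb : (ν (Iic (t i₀))).toReal ≤ (ν (Iic x)).toReal := cdf_mono ν hti₀
        rw [abs_le]
        have h1 := abs_lt.1 hclose
        have h2 := abs_lt.1 hclose1
        constructor
        · linarith
        · linarith
      · -- top case : i₀ + 1 = m - 1
        have heq : i₀ + 1 = m - 1 := by omega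
        have hcast : ((i₀:ℝ)+1) = (m:ℝ) - 1 := by
          have h4 : ((i₀+1:ℕ):ℝ) = ((m-1:ℕ):ℝ) := by rw [heq]
          rw [Nat.cast_sub (by omega)] at h4
          push_cast at h4 ⊢
          linarith
        have hGtop : (ν (Iic (t i₀))).toReal = 1 - 1/m := by
          rw [hGt, hcast]
          field_simp
        have hFlb : (μ n (Iic (t i₀))).toReal ≤ (μ n (Iic x)).toReal :=
          cdf_mono (μ n) hti₀
        have hGlb : (ν (Iic (t i₀))).toReal ≤ (ν (Iic x)).toReal := cdf_mono ν hti₀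
        rw [abs_le]
        have h1 := abs_lt.1 hclose
        constructor
        · linarith
        · linarith
    · -- below the grid
      rw [Finset.not_nonempty_iff_eq_empty] at hs
      have h0mem : ¬ t 0 ≤ x := by
        intro h
        have : (0:ℕ) ∈ (Finset.range (m-1)).filter (fun i => t i ≤ x) := by
          rw [Finset.mem_filter, Finset.mem_range]
          exact ⟨by omega, h⟩
        rw [← hsdef, hs] at this
        exact absurd this (Finset.notMem_empty 0)
      push_neg at h0mem
      have hGt : (ν (Iic (t 0))).toReal = 1/m := by
        have := ht 0 (by omega)
        rw [this]
        norm_num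
      have hclose := hn 0 (Finset.mem_range.2 (by omega))
      have hFub : (μ n (Iic x)).toReal ≤ (μ n (Iic (t 0))).toReal :=
        cdf_mono (μ n) h0mem.le
      have hGub : (ν (Iic x)).toReal ≤ (ν (Iic (t 0))).toReal := cdf_mono ν h0mem.le
      rw [abs_le]
      have h1 := abs_lt.1 hclose
      constructor
      · linarith
      · linarith
  -- conclude
  have hb : ε/3 + 1/(m:ℝ) ≤ 2*ε/3 := by linarith
  have hsup_le : (⨆ x : ℝ, |(μ n (Iic x)).toReal - (ν (Iic x)).toReal|) ≤ ε/3 + 1/m :=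
    Real.iSup_le key (by positivity)
  have hsup_nonneg : 0 ≤ ⨆ x : ℝ, |(μ n (Iic x)).toReal - (ν (Iic x)).toReal| :=
    Real.iSup_nonneg (fun x => abs_nonneg _)
  rw [Real.dist_eq]
  rw [abs_of_nonneg (by simpa using hsup_nonneg)]
  calc (⨆ x : ℝ, |(μ n (Iic x)).toReal - (ν (Iic x)).toReal|) - 0
      ≤ ε/3 + 1/m - 0 := by linarith
    _ ≤ 2*ε/3 := by linarith
    _ < ε := by linarith
end
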